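/- There is no completely positive trace-preserving map Λ from density operators on a finite-dimensional Hilbert space H to density operators on H ⊗ H_aux such that Λ[ρ] is a pure state for every density operator ρ, unless Λ is constant (i.e., Λ[ρ₁] = Λ[ρ₂] for all states ρ₁, ρ₂). -/

import Mathlib

open Matrix Kronecker BigOperators
open scoped ComplexOrder

/-- Trace distance/norm with factor 1/2: `‖A‖ = ½ tr √(AᴴA)`. -/
noncomputable def trNorm {m : Type*} [Fintype m] [DecidableEq m] (A : Matrix m m ℂ) : ℝ :=
  (1 / 2) * ((let hA := Matrix.posSemidef_conjTranspose_mul_self A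
    (hA.1.eigenvectorUnitary : Matrix m m ℂ) *
      diagonal (fun i => ((Real.sqrt (hA.1.eigenvalues i) : ℝ) : ℂ)) *
      (star hA.1.eigenvectorUnitary : Matrix m m ℂ)).trace).re

/-- A density operator: positive semidefinite with unit trace. -/
def IsDensity {m : Type*} [Fintype m] (ρ : Matrix m m ℂ) : Prop :=
  ρ.PosSemidef ∧ ρ.trace = 1

/-- A pure state: a density operator that is a (rank-one) projector. -/
def IsPureState {m : Type*} [Fintype m] (ρ : Matrix m m ℂ) : Prop :=
  IsDensity ρ ∧ ρ * ρ = ρ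

/-- Completely positive trace-preserving map, via a Kraus representation. -/
def IsCPTP {m p : Type*} [Fintype m] [DecidableEq m] [Fintype p]
    (Λ : Matrix m m ℂ →ₗ[ℂ] Matrix p p ℂ) : Prop :=
  ∃ (ι : Type) (s : Finset ι) (K : ι → Matrix p m ℂ),
    (∀ ρ, Λ ρ = ∑ i ∈ s, K i * ρ * (K i)ᴴ) ∧ ∑ i ∈ s, (K i)ᴴ * K i = 1

/-- Partial trace over the second (auxiliary) tensor factor. -/
noncomputable def ptraceB {m b : Type*} [Fintype b] (ρ : Matrix (m × b) (m × b) ℂ) :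
    Matrix m m ℂ :=
  Matrix.of fun i j => ∑ k : b, ρ (i, k) (j, k)

/-- The projector `|χ⟩⟨χ|` onto the vector `χ`. -/
noncomputable def pureProj {m : Type*} (χ : m → ℂ) : Matrix m m ℂ :=
  Matrix.vecMulVec χ (star χ)

/-- `χ` lies in the range of `ρ`. -/
def inRange {m : Type*} [Fintype m] (ρ : Matrix m m ℂ) (χ : m → ℂ) : Prop :=
  ∃ v, ρ *ᵥ v = χ

/-- Worst-case distinguishability: infimum of trace distances of pure states
taken from the ranges of `ρ` and `ρ'`. -/
noncomputable def wcd {m : Type*} [Fintype m] [DecidableEq m] (ρ ρ' : Matrix m m ℂ) : ℝ :=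
  sInf { d : ℝ | ∃ χ χ' : m → ℂ, inRange ρ χ ∧ inRange ρ' χ' ∧
    star χ ⬝ᵥ χ = 1 ∧ star χ' ⬝ᵥ χ' = 1 ∧ d = trNorm (pureProj χ - pureProj χ') }

/-- A matrix with `tr(DᴴD) = 0` is zero. -/
lemma eq_zero_of_trace_conjTranspose_mul_self {p : Type*} [Fintype p] {D : Matrix p p ℂ}
    (h : (Dᴴ * D).trace = 0) : D = 0 := by
  have hdiag : ∀ j, (Dᴴ * D) j j = star (fun i => D i j) ⬝ᵥ (fun i => D i j) := by
    intro j
    simp [Matrix.mul_apply, dotProduct, conjTranspose_apply]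
  have hnn : ∀ j ∈ Finset.univ, (0:ℂ) ≤ (Dᴴ * D) j j := by
    intro j _
    rw [hdiag j]
    exact dotProduct_star_self_nonneg _
  have hzero : ∀ j ∈ Finset.univ, (Dᴴ * D) j j = 0 :=
    (Finset.sum_eq_zero_iff_of_nonneg hnn).mp h
  ext i j
  have hj : (fun i => D i j) = 0 := by
    have h0 := hzero j (Finset.mem_univ j)
    rw [hdiag j] at h0
    exact dotProduct_star_self_eq_zero.mp h0
  exact congrFun hj i

/-- Half of a PSD matrix is PSD. -/
lemma half_smul_posSemidef {p : Type*} [Fintype p] {M : Matrix p p ℂ} (hM : M.PosSemidef) :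
    ((1/2 : ℂ) • M).PosSemidef := by
  constructor
  · have h : ((1/2 : ℂ) • M)ᴴ = star (1/2 : ℂ) • Mᴴ := conjTranspose_smul _ _
    rw [Matrix.IsHermitian, h, hM.1]
    norm_num
  · intro x
    have h2 : (0:ℂ) ≤ (1/2 : ℂ) := by
      rw [Complex.le_def]
      norm_num
    exact (hM.smul h2).2 x

/-- Any CPTP map on a full matrix algebra whose output is pure
for every density operator is a constant map on density operators. -/
theorem no_universal_pure_purifier {n a : Type*} [Fintype n] [DecidableEq n] [Fintype a]
    (Λ : Matrix n n ℂ →ₗ[ℂ] Matrix (n × a) (n × a) ℂ)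
    (hCPTP : IsCPTP Λ)
    (hpure : ∀ ρ : Matrix n n ℂ, IsDensity ρ → IsPureState (Λ ρ)) :
    ∀ ρ₁ ρ₂ : Matrix n n ℂ, IsDensity ρ₁ → IsDensity ρ₂ → Λ ρ₁ = Λ ρ₂ := by
  intro ρ₁ ρ₂ h₁ h₂
  set A := Λ ρ₁ with hAdef
  set B := Λ ρ₂ with hBdef
  obtain ⟨⟨hAps, hAtr⟩, hAsq⟩ := hpure ρ₁ h₁
  obtain ⟨⟨hBps, hBtr⟩, hBsq⟩ := hpure ρ₂ h₂
  -- the midpoint of ρ₁ and ρ₂ is a density operator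
  have hmid : IsDensity ((1/2 : ℂ) • (ρ₁ + ρ₂)) := by
    refine ⟨half_smul_posSemidef (h₁.1.add h₂.1), ?_⟩
    rw [trace_smul, trace_add, h₁.2, h₂.2]
    norm_num
  obtain ⟨-, hPsq⟩ := hpure _ hmid
  have hΛmid : Λ ((1/2 : ℂ) • (ρ₁ + ρ₂)) = (1/2 : ℂ) • (A + B) := by
    rw [_root_.map_smul, map_add]
  rw [hΛmid] at hPsq
  -- purity of the midpoint gives (A+B)² = 2(A+B)
  have hexp : (A + B) * (A + B) = (A + B) + (A + B) := by
    have h4 := congrArg (fun M => (4:ℂ) • M) hPsq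
    simp only [smul_mul_smul_comm, smul_smul] at h4
    norm_num at h4
    rw [h4]; module
  -- hence AB + BA = A + B
  have habba : A * B + B * A = A + B := by
    have hx : A * A + (A * B + (B * A + B * B)) = A + B + (A + B) := by
      rw [← hexp]; noncomm_ring
    rw [hAsq, hBsq] at hx
    have h0 : (A * B + B * A) - (A + B) =
        (A + (A * B + (B * A + B))) - (A + B + (A + B)) := by abel
    rw [hx, sub_self] at h0
    exact sub_eq_zero.mp h0
  -- hence ABA = A
  have hABA : A * B * A = A := by
    have h1 := congrArg (A * ·) habba
    simp only [mul_add, ← mul_assoc, hAsq] at h1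
    rw [hAsq] at h1
    rw [add_comm A (A * B)] at h1
    exact add_left_cancel h1
  -- hence tr(AB) = tr(BA) = 1
  have htrAB : (A * B).trace = 1 := by
    have ht : ((A * B) * A).trace = A.trace := by rw [hABA]
    rw [trace_mul_comm, ← mul_assoc, hAsq] at ht
    rwa [hAtr] at ht
  have htrBA : (B * A).trace = 1 := by rw [trace_mul_comm]; exact htrAB
  -- hence tr((A-B)ᴴ(A-B)) = 0, so A = B
  have hx : (A - B) * (A - B) = A - A * B - B * A + B := by
    have h2 : (A - B) * (A - B) = A * A - A * B - B * A + B * B := by noncomm_ring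
    rw [h2, hAsq, hBsq]
  have hDD : ((A - B)ᴴ * (A - B)).trace = 0 := by
    rw [conjTranspose_sub, hAps.1, hBps.1, hx, trace_add, trace_sub, trace_sub,
      hAtr, hBtr, htrAB, htrBA]
    norm_num
  have hD := eq_zero_of_trace_conjTranspose_mul_self hDD
  exact sub_eq_zero.mp hD
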